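/- arXiv:math/0607099 — 2 statements merged into one kernel-verified Lean document; each statement's English description precedes it below -/
import Mathlib

section
/- Let Z be a compact metric space, let n ∈ ℕ, let a, b ∈ M_n(C(Z)) be positive, and let m ∈ ℕ be such that rank(a)(z) + m ≤ rank(b)(z) for all z ∈ Z. Then for every ε > 0 there exists δ > 0 such that rank((a−ε)_+)(z) + m ≤ rank((b−δ)_+)(z) for all z ∈ Z. -/
open scoped Matrix.Norms.L2Operator ComplexOrder
open Filter Topology

noncomputable section

/-- The cut-down `(A - ε)₊` of a matrix, obtained by applying `t ↦ max (t - ε) 0` via the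
continuous functional calculus.  (For a positive element of `Mₙ(C(Z))`, the value of
`(a - ε)₊` at a point `z` is exactly `matCutDown (a z) ε`.) -/
def matCutDown {n : ℕ} (A : Matrix (Fin n) (Fin n) ℂ) (ε : ℝ) : Matrix (Fin n) (Fin n) ℂ :=
  cfc (fun t : ℝ => max (t - ε) 0) A

namespace RankCutDownAux

variable {n : ℕ} {A B : Matrix (Fin n) (Fin n) ℂ}

lemma rank_cfc_count (hA : A.IsHermitian) (f : ℝ → ℝ) :
    (cfc f A).rank = Fintype.card {i // f (hA.eigenvalues i) ≠ 0} := by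
  classical
  rw [hA.cfc_eq, Matrix.IsHermitian.cfc, Unitary.conjStarAlgAut_apply, ← Unitary.coe_star]
  simp [-isUnit_iff_ne_zero, -Unitary.coe_star, Matrix.rank_diagonal, Function.comp]

lemma rank_matCutDown (hA : A.IsHermitian) (c : ℝ) :
    (matCutDown A c).rank = Fintype.card {i // c < hA.eigenvalues i} := by
  classical
  rw [matCutDown, rank_cfc_count hA]
  refine Fintype.card_congr (Equiv.subtypeEquivRight fun i => ?_)
  constructor
  · intro h
    by_contra h'
    push_neg at h'
    exact h (max_eq_right (by linarith))
  · intro h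
    rw [max_eq_left (by linarith)]
    intro h'
    linarith [sub_eq_zero.mp h']

lemma rank_count_pos (hA : A.PosSemidef) :
    A.rank = Fintype.card {i // 0 < hA.1.eigenvalues i} := by
  classical
  rw [hA.1.rank_eq_card_non_zero_eigs]
  refine Fintype.card_congr (Equiv.subtypeEquivRight fun i => ?_)
  have := hA.eigenvalues_nonneg i
  constructor
  · intro h; exact lt_of_le_of_ne this (Ne.symm h)
  · intro h; exact ne_of_gt h

lemma eigLin (hA : A.IsHermitian) (i : Fin n) :
    Matrix.toEuclideanLin A (hA.eigenvectorBasis i)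
      = (hA.eigenvalues i : ℂ) • hA.eigenvectorBasis i := by
  apply_fun (WithLp.equiv 2 _)
  simp only [WithLp.equiv_apply, Matrix.piLp_ofLp_toEuclideanLin]
  ext j
  have := congrFun (hA.mulVec_eigenvectorBasis i) j
  simpa using this

/-- The real quadratic form of a matrix. -/
def Qr (A : Matrix (Fin n) (Fin n) ℂ) (x : EuclideanSpace ℂ (Fin n)) : ℝ :=
  (inner ℂ x (Matrix.toEuclideanLin A x) : ℂ).re

lemma Q_formula (hA : A.IsHermitian) (x : EuclideanSpace ℂ (Fin n)) :
    (inner ℂ x (Matrix.toEuclideanLin A x) : ℂ) =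
      ∑ i, (hA.eigenvalues i : ℂ) * (‖hA.eigenvectorBasis.repr x i‖ : ℂ) ^ 2 := by
  set b := hA.eigenvectorBasis with hb
  have hTx : Matrix.toEuclideanLin A x
      = ∑ i, b.repr x i • ((hA.eigenvalues i : ℂ) • b i) := by
    conv_lhs => rw [← b.sum_repr x]
    rw [map_sum]
    congr 1
    ext i
    rw [LinearMap.map_smul, eigLin hA i]
  rw [hTx, inner_sum]
  congr 1
  ext i
  rw [inner_smul_right, inner_smul_right]
  have h1 : (inner ℂ x (b i) : ℂ) = starRingEnd ℂ (b.repr x i) := by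
    rw [← inner_conj_symm, b.repr_apply_apply]
  rw [h1]
  have : b.repr x i * ((hA.eigenvalues i : ℂ) * (starRingEnd ℂ) (b.repr x i))
      = (hA.eigenvalues i : ℂ) * (b.repr x i * (starRingEnd ℂ) (b.repr x i)) := by ring
  rw [this, Complex.mul_conj']

lemma Qr_formula (hA : A.IsHermitian) (x : EuclideanSpace ℂ (Fin n)) :
    Qr A x = ∑ i, hA.eigenvalues i * ‖hA.eigenvectorBasis.repr x i‖ ^ 2 := by
  rw [Qr, Q_formula hA x]
  push_cast
  rw [Complex.re_sum]
  simp [← Complex.ofReal_pow]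

lemma parseval (hA : A.IsHermitian) (x : EuclideanSpace ℂ (Fin n)) :
    ‖x‖ ^ 2 = ∑ i, ‖hA.eigenvectorBasis.repr x i‖ ^ 2 := by
  rw [← hA.eigenvectorBasis.repr.norm_map x, EuclideanSpace.norm_eq,
    Real.sq_sqrt (by positivity)]

lemma coord_zero (hA : A.IsHermitian) {P : Fin n → Prop} {x : EuclideanSpace ℂ (Fin n)}
    (hx : x ∈ Submodule.span ℂ (Set.range fun i : {i // P i} =>
      (hA.eigenvectorBasis i : EuclideanSpace ℂ (Fin n)))) {j : Fin n} (hj : ¬ P j) :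
    hA.eigenvectorBasis.repr x j = 0 := by
  induction hx using Submodule.span_induction with
  | mem y hy =>
    obtain ⟨i, rfl⟩ := hy
    rw [OrthonormalBasis.repr_self]
    simp only [EuclideanSpace.single_apply]
    rw [if_neg]
    rintro rfl; exact hj i.2
  | zero => simp
  | add y z _ _ hy hz => rw [map_add]; simp [hy, hz]
  | smul c y _ hy => rw [map_smul]; simp [hy]

lemma Qr_sub_le (A B : Matrix (Fin n) (Fin n) ℂ) (x : EuclideanSpace ℂ (Fin n)) :
    Qr A x ≤ Qr B x + ‖A - B‖ * ‖x‖ ^ 2 := by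
  have h1 : Qr A x - Qr B x = (inner ℂ x (Matrix.toEuclideanLin (A - B) x) : ℂ).re := by
    rw [Qr, Qr, map_sub, LinearMap.sub_apply, inner_sub_right, Complex.sub_re]
  have h2 : (inner ℂ x (Matrix.toEuclideanLin (A - B) x) : ℂ).re
      ≤ ‖(inner ℂ x (Matrix.toEuclideanLin (A - B) x) : ℂ)‖ := Complex.re_le_norm _
  have h3 : ‖(inner ℂ x (Matrix.toEuclideanLin (A - B) x) : ℂ)‖
      ≤ ‖x‖ * ‖Matrix.toEuclideanLin (A - B) x‖ := norm_inner_le_norm _ _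
  have h4 : ‖Matrix.toEuclideanLin (A - B) x‖ ≤ ‖A - B‖ * ‖x‖ := by
    rw [Matrix.l2_opNorm_def]
    exact ((Matrix.toEuclideanLin.trans LinearMap.toContinuousLinearMap) (A - B)).le_opNorm x
  nlinarith [norm_nonneg x]

/-- Key counting inequality (a Weyl-type perturbation bound). -/
lemma weyl_count (hA : A.IsHermitian) (hB : B.IsHermitian)
    {r c d : ℝ} (hr : ‖A - B‖ ≤ r) (hdc : d + r < c) :
    Fintype.card {i // c < hA.eigenvalues i} ≤ Fintype.card {i // d < hB.eigenvalues i} := by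
  classical
  set V : Submodule ℂ (EuclideanSpace ℂ (Fin n)) :=
    Submodule.span ℂ (Set.range fun i : {i // c < hA.eigenvalues i} =>
      (hA.eigenvectorBasis i : EuclideanSpace ℂ (Fin n))) with hV
  set W : Submodule ℂ (EuclideanSpace ℂ (Fin n)) :=
    Submodule.span ℂ (Set.range fun i : {i // ¬ d < hB.eigenvalues i} =>
      (hB.eigenvectorBasis i : EuclideanSpace ℂ (Fin n))) with hW
  have hVrank : Module.finrank ℂ V = Fintype.card {i // c < hA.eigenvalues i} :=
    finrank_span_eq_card ((hA.eigenvectorBasis.orthonormal.linearIndependent).comp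
      Subtype.val Subtype.val_injective)
  have hWrank : Module.finrank ℂ W = Fintype.card {i // ¬ d < hB.eigenvalues i} :=
    finrank_span_eq_card ((hB.eigenvectorBasis.orthonormal.linearIndependent).comp
      Subtype.val Subtype.val_injective)
  have hdisj : V ⊓ W = ⊥ := by
    rw [Submodule.eq_bot_iff]
    rintro x ⟨hxV, hxW⟩
    by_contra hx0
    have hxn : (0:ℝ) < ‖x‖ ^ 2 := by have := norm_pos_iff.mpr hx0; positivity
    have hQA : c * ‖x‖ ^ 2 ≤ Qr A x := by
      rw [Qr_formula hA, parseval hA, Finset.mul_sum]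
      refine Finset.sum_le_sum fun i _ => ?_
      by_cases hi : c < hA.eigenvalues i
      · nlinarith [sq_nonneg ‖hA.eigenvectorBasis.repr x i‖, le_of_lt hi]
      · rw [coord_zero hA hxV hi]; simp
    have hQB : Qr B x ≤ d * ‖x‖ ^ 2 := by
      rw [Qr_formula hB, parseval hB, Finset.mul_sum]
      refine Finset.sum_le_sum fun i _ => ?_
      by_cases hi : d < hB.eigenvalues i
      · rw [coord_zero hB hxW (by simpa using hi)]; simp
      · push_neg at hi
        nlinarith [sq_nonneg ‖hB.eigenvectorBasis.repr x i‖]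
    have := Qr_sub_le A B x
    nlinarith
  have hsum : Module.finrank ℂ V + Module.finrank ℂ W ≤ n := by
    have h1 := Submodule.finrank_sup_add_finrank_inf_eq V W
    rw [hdisj] at h1
    simp only [finrank_bot, add_zero] at h1
    have h2 : Module.finrank ℂ (V ⊔ W : Submodule ℂ (EuclideanSpace ℂ (Fin n))) ≤ n := by
      have := Submodule.finrank_le (V ⊔ W)
      rwa [finrank_euclideanSpace, Fintype.card_fin] at this
    omega
  have hcompl : Fintype.card {i // ¬ d < hB.eigenvalues i}
      = n - Fintype.card {i // d < hB.eigenvalues i} := by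
    rw [Fintype.card_subtype_compl, Fintype.card_fin]
  have hle : Fintype.card {i // d < hB.eigenvalues i} ≤ n := by
    have := Fintype.card_subtype_le (fun i => d < hB.eigenvalues i)
    rwa [Fintype.card_fin] at this
  omega

lemma exists_gap (e : Fin n → ℝ) : ∃ δ > (0:ℝ), ∀ i, 0 < e i → 3 * δ < e i := by
  classical
  set s := Finset.univ.filter (fun i => 0 < e i) with hs
  by_cases hne : s.Nonempty
  · have hpos : 0 < s.inf' hne e := by
      rw [Finset.lt_inf'_iff]
      intro i hi
      simpa [hs] using hi
    refine ⟨s.inf' hne e / 6, by positivity, fun i hi => ?_⟩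
    have hmem : i ∈ s := by simp [hs, hi]
    have h := Finset.inf'_le e hmem
    linarith
  · refine ⟨1, one_pos, fun i hi => ?_⟩
    exact absurd ⟨i, by simp [hs, hi]⟩ hne

end RankCutDownAux

open RankCutDownAux in
/-- if `Z` is a compact metric space, `a, b ∈ Mₙ(C(Z))` are positive and
`rank(a)(z) + m ≤ rank(b)(z)` for all `z ∈ Z`, then for every `ε > 0` there is `δ > 0` with
`rank((a-ε)₊)(z) + m ≤ rank((b-δ)₊)(z)` for all `z ∈ Z`. -/
theorem rank_cutDown_le {Z : Type*} [MetricSpace Z] [CompactSpace Z] {n : ℕ}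
    (a b : C(Z, Matrix (Fin n) (Fin n) ℂ))
    (ha : ∀ z, (a z).PosSemidef) (hb : ∀ z, (b z).PosSemidef)
    (m : ℕ) (hrank : ∀ z, (a z).rank + m ≤ (b z).rank) :
    ∀ ε > (0 : ℝ), ∃ δ > (0 : ℝ), ∀ z,
      (matCutDown (a z) ε).rank + m ≤ (matCutDown (b z) δ).rank := by
  intro ε hε
  classical
  have haH : ∀ z, (a z).IsHermitian := fun z => (ha z).1
  have hbH : ∀ z, (b z).IsHermitian := fun z => (hb z).1
  choose δf hδf hδf3 using fun z : Z => exists_gap ((hbH z).eigenvalues)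
  rcases isEmpty_or_nonempty Z with hZ | hZ
  · exact ⟨1, one_pos, fun z => (IsEmpty.false z).elim⟩
  set U : Z → Set Z := fun w => {z' | ‖a z' - a w‖ < ε/2 ∧ ‖b z' - b w‖ < δf w} with hU
  have hUopen : ∀ w, IsOpen (U w) := fun w =>
    (isOpen_lt (by fun_prop : Continuous fun z' : Z => ‖a z' - a w‖) continuous_const).inter
      (isOpen_lt (by fun_prop : Continuous fun z' : Z => ‖b z' - b w‖) continuous_const)
  have hUmem : ∀ w, w ∈ U w := by
    intro w
    constructor <;> simp [hδf w, half_pos hε]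
  obtain ⟨t, -, ht⟩ := (isCompact_univ (X := Z)).elim_nhds_subcover U
    (fun w _ => (hUopen w).mem_nhds (hUmem w))
  have htne : t.Nonempty := by
    obtain ⟨w, hw, -⟩ := Set.mem_iUnion₂.mp (ht (Set.mem_univ hZ.some))
    exact ⟨w, hw⟩
  refine ⟨t.inf' htne δf, ?_, ?_⟩
  · rw [gt_iff_lt, Finset.lt_inf'_iff]
    exact fun w _ => hδf w
  intro z
  obtain ⟨w, hwt, hzw⟩ := Set.mem_iUnion₂.mp (ht (Set.mem_univ z))
  have hδle : t.inf' htne δf ≤ δf w := Finset.inf'_le δf hwt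
  have h1 : (matCutDown (a z) ε).rank ≤ (a w).rank := by
    rw [rank_matCutDown (haH z), rank_count_pos (ha w)]
    exact weyl_count (haH z) (haH w) (r := ε/2) hzw.1.le (by linarith)
  have h2 : (b w).rank ≤ (matCutDown (b z) (t.inf' htne δf)).rank := by
    rw [rank_matCutDown (hbH z), rank_count_pos (hb w)]
    have hcard : Fintype.card {i // 0 < (hbH w).eigenvalues i}
        = Fintype.card {i // 3 * δf w < (hbH w).eigenvalues i} := by
      refine Fintype.card_congr (Equiv.subtypeEquivRight fun i => ?_)
      constructor
      · exact hδf3 w i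
      · intro h
        have := hδf w
        linarith
    rw [hcard]
    refine weyl_count (hbH w) (hbH z) (r := δf w) ?_ (by linarith [hδf w])
    rw [norm_sub_rev]
    exact hzw.2.le
  calc (matCutDown (a z) ε).rank + m ≤ (a w).rank + m := by omega
    _ ≤ (b w).rank := hrank w
    _ ≤ (matCutDown (b z) (t.inf' htne δf)).rank := h2
end
end

section
/- Let a, b ∈ M_n(ℂ) be positive matrices. Then a is Cuntz subequivalent to b if and only if rank(a) ≤ rank(b). -/
open scoped Matrix.Norms.L2Operator ComplexOrder
open Filter Topology

noncomputable section

/-- `a` is Cuntz subequivalent to `b`: there is a sequence `(vᵢ)` with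
`‖vᵢ * b * vᵢ* - a‖ → 0`. -/
def CuntzLE {A : Type*} [NonUnitalNormedRing A] [StarRing A] (a b : A) : Prop :=
  ∃ v : ℕ → A, Tendsto (fun i => ‖v i * b * star (v i) - a‖) atTop (𝓝 0)

namespace CuntzAux

open Matrix

/-- Given nonnegative functions `d, e` and an injection of the support of `d` into the
support of `e`, there is a matrix `G` with `G * diagonal e * G* = diagonal d`. -/
lemma exists_conj_diagonal {n : ℕ} (d e : Fin n → ℝ) (hd : ∀ i, 0 ≤ d i) (he : ∀ i, 0 ≤ e i)
    (f : {i : Fin n // d i ≠ 0} → {i : Fin n // e i ≠ 0}) (hf : Function.Injective f) :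
    ∃ G : Matrix (Fin n) (Fin n) ℂ,
      G * Matrix.diagonal ((RCLike.ofReal : ℝ → ℂ) ∘ e) * star G
        = Matrix.diagonal ((RCLike.ofReal : ℝ → ℂ) ∘ d) := by
  classical
  set G : Matrix (Fin n) (Fin n) ℂ := Matrix.of fun i j =>
    if h : d i ≠ 0 then
      (if (f ⟨i, h⟩ : Fin n) = j then
        (RCLike.ofReal (Real.sqrt (d i / e (f ⟨i, h⟩))) : ℂ) else 0)
    else 0 with hG
  refine ⟨G, ?_⟩
  ext i k
  rw [Matrix.mul_apply]
  simp only [Matrix.mul_diagonal, Matrix.star_apply, Function.comp_apply]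
  by_cases hi : d i ≠ 0
  · rw [Finset.sum_eq_single (f ⟨i, hi⟩ : Fin n)]
    · have hGi : G i (f ⟨i, hi⟩ : Fin n)
          = (RCLike.ofReal (Real.sqrt (d i / e (f ⟨i, hi⟩))) : ℂ) := by
        simp [hG, hi]
      by_cases hik : i = k
      · subst hik
        rw [hGi, Matrix.diagonal_apply_eq]
        have hepos : e (f ⟨i, hi⟩ : Fin n) ≠ 0 := (f ⟨i, hi⟩).2
        rw [RCLike.star_def, RCLike.conj_ofReal, ← RCLike.ofReal_mul, ← RCLike.ofReal_mul]
        simp only [Function.comp_apply]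
        congr 1
        rw [mul_right_comm, Real.mul_self_sqrt (div_nonneg (hd i) (he _)),
          div_mul_cancel₀ _ hepos]
      · rw [Matrix.diagonal_apply_ne _ hik]
        have : G k (f ⟨i, hi⟩ : Fin n) = 0 := by
          by_cases hk : d k ≠ 0
          · have hne : (f ⟨k, hk⟩ : Fin n) ≠ (f ⟨i, hi⟩ : Fin n) := by
              intro hcon
              exact hik (congrArg Subtype.val (hf (Subtype.ext hcon))).symm
            simp [hG, hk, hne]
          · simp [hG, hk]
        rw [this]
        simp
    · intro j _ hj
      have : G i j = 0 := by simp [hG, hi, hj.symm]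
      rw [this]
      simp
    · intro h
      exact absurd (Finset.mem_univ _) h
  · push_neg at hi
    have hzero : ∀ j, G i j = 0 := fun j => by simp [hG, hi]
    simp only [hzero, zero_mul]
    rw [Finset.sum_const_zero]
    by_cases hik : i = k
    · subst hik; rw [Matrix.diagonal_apply_eq]; simp [hi]
    · rw [Matrix.diagonal_apply_ne _ hik]

end CuntzAux

/-- for positive matrices `a, b ∈ Mₙ(ℂ)`, `a` is Cuntz subequivalent to `b`
if and only if `rank(a) ≤ rank(b)`. -/
theorem cuntzLE_iff_rank_le {n : ℕ} (a b : Matrix (Fin n) (Fin n) ℂ)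
    (ha : a.PosSemidef) (hb : b.PosSemidef) :
    CuntzLE a b ↔ a.rank ≤ b.rank := by
  classical
  have hA : a.IsHermitian := ha.1
  have hB : b.IsHermitian := hb.1
  constructor
  · rintro ⟨v, hv⟩
    set x : ℕ → Matrix (Fin n) (Fin n) ℂ := fun k => v k * b * star (v k) with hxdef
    have hx : Tendsto x atTop (𝓝 a) :=
      tendsto_iff_norm_sub_tendsto_zero.mpr hv
    set U : Matrix (Fin n) (Fin n) ℂ := (hA.eigenvectorUnitary : Matrix (Fin n) (Fin n) ℂ)
      with hUdef
    have hU : star U * U = 1 := Matrix.mem_unitaryGroup_iff'.mp hA.eigenvectorUnitary.2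
    set t := {i : Fin n // hA.eigenvalues i ≠ 0} with ht
    -- the compression map
    set F : Matrix (Fin n) (Fin n) ℂ → ℂ := fun y =>
      ((star U * y * U).submatrix (Subtype.val : t → Fin n) Subtype.val).det with hFdef
    have hcontEntry : ∀ p q : Fin n,
        Continuous fun y : Matrix (Fin n) (Fin n) ℂ => (star U * y * U) p q := by
      intro p q
      exact LinearMap.continuous_of_finiteDimensional
        ((LinearMap.proj q).comp ((LinearMap.proj p).comp
          ((LinearMap.mulRight ℂ U).comp (LinearMap.mulLeft ℂ (star U)))))
    have hFcont : Continuous F := by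
      have hFeq : F = fun y : Matrix (Fin n) (Fin n) ℂ => ∑ σ : Equiv.Perm t,
          ((Equiv.Perm.sign σ : ℤ) : ℂ) * ∏ p : t,
            (star U * y * U) (Subtype.val (σ p)) (Subtype.val p) := by
        funext y
        rw [hFdef]
        simp only [Matrix.det_apply', Matrix.submatrix_apply]
        rfl
      rw [hFeq]
      refine continuous_finset_sum _ fun σ _ => Continuous.mul continuous_const ?_
      exact continuous_finset_prod _ fun p _ => hcontEntry _ _
    have hdiag : star U * a * U
        = Matrix.diagonal ((RCLike.ofReal : ℝ → ℂ) ∘ hA.eigenvalues) := by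
      have key : star U * (U * Matrix.diagonal ((RCLike.ofReal : ℝ → ℂ) ∘ hA.eigenvalues)
          * star U) * U
          = Matrix.diagonal ((RCLike.ofReal : ℝ → ℂ) ∘ hA.eigenvalues) := by
        simp only [Matrix.mul_assoc]
        rw [hU, mul_one, ← Matrix.mul_assoc, hU, one_mul]
      conv_lhs => rw [hA.spectral_theorem, Unitary.conjStarAlgAut_apply]
      exact key
    have hFa : F a = ∏ p : t, ((RCLike.ofReal (hA.eigenvalues (p : Fin n))) : ℂ) := by
      rw [hFdef]
      simp only
      rw [hdiag]
      rw [show (Matrix.diagonal ((RCLike.ofReal : ℝ → ℂ) ∘ hA.eigenvalues)).submatrix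
            (Subtype.val : t → Fin n) Subtype.val
          = Matrix.diagonal (fun p : t => ((RCLike.ofReal (hA.eigenvalues (p : Fin n))) : ℂ)) by
        ext p q
        by_cases hpq : p = q
        · subst hpq; simp
        · have hpq' : (p : Fin n) ≠ (q : Fin n) := fun hc => hpq (Subtype.ext hc)
          simp [Matrix.submatrix_apply, Matrix.diagonal_apply_ne _ hpq',
            Matrix.diagonal_apply_ne _ hpq]]
      exact Matrix.det_diagonal
    have hFa0 : F a ≠ 0 := by
      rw [hFa]
      exact Finset.prod_ne_zero_iff.mpr fun p _ => RCLike.ofReal_ne_zero.mpr p.2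
    have hFx : Tendsto (fun k => F (x k)) atTop (𝓝 (F a)) :=
      (hFcont.tendsto a).comp hx
    obtain ⟨k, hk⟩ := (hFx.eventually_ne hFa0).exists
    -- now rank a = card t ≤ rank (x k) ≤ rank b
    set M : Matrix (Fin n) (Fin n) ℂ := star U * x k * U with hM
    set c : Matrix t t ℂ := M.submatrix Subtype.val Subtype.val with hc
    have hcu : IsUnit c := (Matrix.isUnit_iff_isUnit_det c).mpr (isUnit_iff_ne_zero.mpr hk)
    have hcard : a.rank = Fintype.card t := hA.rank_eq_card_non_zero_eigs
    have hrc : c.rank = Fintype.card t := Matrix.rank_of_isUnit c hcu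
    have hfactor : c = (1 : Matrix (Fin n) (Fin n) ℂ).submatrix Subtype.val id * M *
        (1 : Matrix (Fin n) (Fin n) ℂ).submatrix id Subtype.val := by
      rw [hc]
      conv_lhs => rw [show M = 1 * M * 1 by rw [one_mul, mul_one]]
      rw [Matrix.submatrix_mul _ _ _ (id : Fin n → Fin n) _ Function.bijective_id,
        Matrix.submatrix_mul _ _ _ (id : Fin n → Fin n) _ Function.bijective_id,
        Matrix.submatrix_id_id]
    have hrank1 : c.rank ≤ M.rank := by
      rw [hfactor]
      exact le_trans (Matrix.rank_mul_le_left _ _)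
        (Matrix.rank_mul_le_right _ _)
    have hrank2 : M.rank ≤ (x k).rank := by
      rw [hM, Matrix.mul_assoc]
      exact le_trans (Matrix.rank_mul_le_right _ _) (Matrix.rank_mul_le_left _ _)
    have hrank3 : (x k).rank ≤ b.rank := by
      rw [hxdef]
      exact le_trans (Matrix.rank_mul_le_left _ _) (Matrix.rank_mul_le_right _ _)
    calc a.rank = c.rank := by rw [hcard, hrc]
      _ ≤ M.rank := hrank1
      _ ≤ (x k).rank := hrank2
      _ ≤ b.rank := hrank3
  · intro hrank
    have hcard : Fintype.card {i : Fin n // hA.eigenvalues i ≠ 0}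
        ≤ Fintype.card {i : Fin n // hB.eigenvalues i ≠ 0} := by
      rw [← hA.rank_eq_card_non_zero_eigs, ← hB.rank_eq_card_non_zero_eigs]
      exact hrank
    obtain ⟨f⟩ := Function.Embedding.nonempty_of_card_le hcard
    obtain ⟨G, hG⟩ := CuntzAux.exists_conj_diagonal hA.eigenvalues hB.eigenvalues
      (fun i => ha.eigenvalues_nonneg i) (fun i => hb.eigenvalues_nonneg i) f f.injective
    set UA : Matrix (Fin n) (Fin n) ℂ := (hA.eigenvectorUnitary : Matrix (Fin n) (Fin n) ℂ)
    set UB : Matrix (Fin n) (Fin n) ℂ := (hB.eigenvectorUnitary : Matrix (Fin n) (Fin n) ℂ)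
    have hUB : star UB * UB = 1 := Matrix.mem_unitaryGroup_iff'.mp hB.eigenvectorUnitary.2
    set w : Matrix (Fin n) (Fin n) ℂ := UA * G * star UB with hw
    have hkey : w * b * star w = a := by
      have hstarw : star w = UB * star G * star UA := by
        rw [hw]
        simp [mul_assoc]
      rw [hstarw, hw]
      conv_lhs => rw [hB.spectral_theorem, Unitary.conjStarAlgAut_apply]
      have key : UA * G * star UB *
            (UB * Matrix.diagonal ((RCLike.ofReal : ℝ → ℂ) ∘ hB.eigenvalues) * star UB)
          * (UB * star G * star UA)
          = UA * (G * Matrix.diagonal ((RCLike.ofReal : ℝ → ℂ) ∘ hB.eigenvalues) * star G)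
            * star UA := by
        have e1 : UA * G * star UB *
            (UB * Matrix.diagonal ((RCLike.ofReal : ℝ → ℂ) ∘ hB.eigenvalues) * star UB)
            * (UB * star G * star UA)
            = UA * (G * ((star UB * UB) *
              (Matrix.diagonal ((RCLike.ofReal : ℝ → ℂ) ∘ hB.eigenvalues) *
                ((star UB * UB) * (star G * star UA))))) := by
          simp only [Matrix.mul_assoc]
        rw [e1, hUB, one_mul, one_mul]
        simp only [Matrix.mul_assoc]
      rw [key, hG]
      exact hA.spectral_theorem.symm
    refine ⟨fun _ => w, ?_⟩
    simp only [hkey, sub_self, norm_zero]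
    exact tendsto_const_nhds

end
end
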